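/- For every natural number n, the number of pairs (U, B) with U : Fin n → Prop and B : Fin n → Fin n → Prop satisfying (∀ x y, U x ∨ B x y) ∧ (∀ x y, ¬ U x ∨ B y x) equals Σ_{k=0}^{n} (n choose k) · 2^(k·(n−k)). This is the model count of the sentence (∀x∀y U(x) ∨ B(x,y)) ∧ (∀x∀y ¬U(x) ∨ B(y,x)), corresponding to labeled graphs with 2-colored nodes where black nodes are only connected to white nodes and vice versa (OEIS A047863). -/

import Mathlib

theorem count_two_colored_bipartite_like (n : ℕ) :
    Nat.card {UB : (Fin n → Prop) × (Fin n → Fin n → Prop) //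
        (∀ x y, UB.1 x ∨ UB.2 x y) ∧ (∀ x y, ¬ UB.1 x ∨ UB.2 y x)} =
      ∑ k ∈ Finset.range (n + 1), Nat.choose n k * 2 ^ (k * (n - k)) := by
  classical
  have e : {UB : (Fin n → Prop) × (Fin n → Fin n → Prop) //
        (∀ x y, UB.1 x ∨ UB.2 x y) ∧ (∀ x y, ¬ UB.1 x ∨ UB.2 y x)} ≃
      Σ s : Finset (Fin n), ({p : Fin n × Fin n // p.1 ∈ s ∧ p.2 ∉ s} → Prop) := by
    refine (Equiv.sigmaFiberEquiv
        (fun x : {UB : (Fin n → Prop) × (Fin n → Fin n → Prop) //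
          (∀ x y, UB.1 x ∨ UB.2 x y) ∧ (∀ x y, ¬ UB.1 x ∨ UB.2 y x)} =>
          Set.toFinset {a | x.val.1 a})).symm.trans
      (Equiv.sigmaCongrRight fun s => ?_)
    refine ⟨fun x p => x.val.val.2 p.val.1 p.val.2,
      fun f => ⟨⟨⟨fun a => a ∈ s,
        fun a b => a ∉ s ∨ b ∈ s ∨ ∃ h : a ∈ s ∧ b ∉ s, f ⟨(a, b), h⟩⟩, ?_, ?_⟩, ?_⟩,
      ?_, ?_⟩
    · intro x y; by_cases hx : x ∈ s
      · exact Or.inl hx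
      · exact Or.inr (Or.inl hx)
    · intro x y; by_cases hx : x ∈ s
      · exact Or.inr (Or.inr (Or.inl hx))
      · exact Or.inl hx
    · ext a; simp
    · rintro ⟨⟨⟨U, B⟩, h1, h2⟩, hs⟩
      have hU : ∀ a, U a ↔ a ∈ s := by
        intro a
        rw [← hs, Set.mem_toFinset]; rfl
      refine Subtype.ext (Subtype.ext ?_)
      dsimp only
      refine Prod.ext ?_ ?_
      · funext a; exact propext ((hU a).symm)
      · funext a b
        refine propext ⟨?_, ?_⟩
        · rintro (ha | hb | ⟨h, hB⟩)
          · rcases h1 a b with h | h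
            · exact absurd ((hU a).1 h) ha
            · exact h
          · rcases h2 b a with h | h
            · exact absurd ((hU b).2 hb) h
            · exact h
          · exact hB
        · intro hB
          by_cases ha : a ∈ s
          · by_cases hb : b ∈ s
            · exact Or.inr (Or.inl hb)
            · exact Or.inr (Or.inr ⟨⟨ha, hb⟩, hB⟩)
          · exact Or.inl ha
    · intro f
      funext p
      rcases p with ⟨⟨a, b⟩, ha, hb⟩
      dsimp only
      refine propext ⟨?_, ?_⟩
      · rintro (h | h | ⟨h, hf⟩)
        · exact absurd ha h
        · exact absurd h hb
        · exact hf
      · intro hf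
        exact Or.inr (Or.inr ⟨⟨ha, hb⟩, hf⟩)
  rw [Nat.card_congr e, Nat.card_eq_fintype_card, Fintype.card_sigma]
  have hcard : ∀ s : Finset (Fin n),
      Fintype.card ({p : Fin n × Fin n // p.1 ∈ s ∧ p.2 ∉ s} → Prop) =
        2 ^ (s.card * (n - s.card)) := by
    intro s
    rw [Fintype.card_fun, Fintype.card_prop]
    congr 1
    have : Fintype.card {p : Fin n × Fin n // p.1 ∈ s ∧ p.2 ∉ s} =
        Fintype.card ↥(s ×ˢ sᶜ) := by
      apply Fintype.card_congr
      apply Equiv.subtypeEquivRight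
      intro p
      simp [Finset.mem_product]
    rw [this, Fintype.card_coe, Finset.card_product, Finset.card_compl,
      Fintype.card_fin]
  simp_rw [hcard]
  rw [show (Finset.univ : Finset (Finset (Fin n))) =
      (Finset.univ : Finset (Fin n)).powerset by rw [Finset.powerset_univ],
    Finset.sum_powerset]
  rw [Finset.card_univ, Fintype.card_fin]
  refine Finset.sum_congr rfl fun k hk => ?_
  rw [Finset.sum_powersetCard k Finset.univ (fun m => 2 ^ (m * (n - m))),
    Finset.card_univ, Fintype.card_fin, smul_eq_mul]
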